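/- Let δ ≥ 0, s_0 > 0, and let f : [0,∞) → (0,∞) be continuous with ∫_0^∞ f(u) du = 1; set F(t) := ∫_0^t f(u) du and assume F(t) < 1 for all t ≥ 0. Suppose r : [0,∞) → ℝ is continuous and the discounted cash value x(t) := s_0 − ∫_0^t e^{−δu} r(u) du satisfies the instantaneous-fairness relation e^{−δt} r(t) (1 − F(t)) = f(t) x(t) for all t ≥ 0. Then r(t) = s_0 f(t) e^{δt} and x(t) = s_0 (1 − F(t)) for all t ≥ 0. -/

import Mathlib

open MeasureTheory

lemma ftc_aux (g : ℝ → ℝ) (hg : ContinuousOn g (Set.Ici 0)) {x : ℝ} (hx : 0 ≤ x) :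
    HasDerivWithinAt (fun u => ∫ v in (0:ℝ)..u, g v) (g x) (Set.Ici x) x := by
  have hIoi : Set.Ioi x ⊆ Set.Ici (0:ℝ) := fun y hy => le_of_lt (lt_of_le_of_lt hx hy)
  have hint : IntervalIntegrable g volume 0 x :=
    ContinuousOn.intervalIntegrable
      (by rw [Set.uIcc_of_le hx]; exact hg.mono Set.Icc_subset_Ici_self)
  refine intervalIntegral.integral_hasDerivWithinAt_right hint ?_ ?_
  · exact ⟨Set.Ioi x, self_mem_nhdsWithin,
      ((hg.mono hIoi).aestronglyMeasurable measurableSet_Ioi)⟩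
  · exact (hg x hx).mono hIoi

lemma cont_aux (g : ℝ → ℝ) (hg : ContinuousOn g (Set.Ici 0)) {t : ℝ} (ht : 0 ≤ t) :
    ContinuousOn (fun u => ∫ v in (0:ℝ)..u, g v) (Set.Icc 0 t) := by
  have h := intervalIntegral.continuousOn_primitive_interval (f := g) (a := (0:ℝ)) (b := t)
    (μ := volume) ?_
  · rwa [Set.uIcc_of_le ht] at h
  · rw [Set.uIcc_of_le ht]
    exact (hg.mono Set.Icc_subset_Ici_self).integrableOn_compact isCompact_Icc

/-- The instantaneous-fairness relation between the payout rate and the cash value of a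
single participant uniquely determines the payout rate `r(t) = s₀ f(t) e^{δt}` and the
cash value `x(t) = s₀ (1 - F(t))`. -/
theorem stmt_4 (δ s0 : ℝ) (hδ : 0 ≤ δ) (hs0 : 0 < s0)
    (f : ℝ → ℝ) (hf_cont : ContinuousOn f (Set.Ici 0))
    (hf_pos : ∀ t, 0 ≤ t → 0 < f t)
    (hf_int : IntegrableOn f (Set.Ioi 0))
    (hf_one : ∫ u in Set.Ioi (0 : ℝ), f u = 1)
    (hF_lt : ∀ t, 0 ≤ t → (∫ u in (0 : ℝ)..t, f u) < 1)
    (r : ℝ → ℝ) (hr_cont : ContinuousOn r (Set.Ici 0))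
    (hfair : ∀ t, 0 ≤ t →
      Real.exp (-δ * t) * r t * (1 - ∫ u in (0 : ℝ)..t, f u)
        = f t * (s0 - ∫ u in (0 : ℝ)..t, Real.exp (-δ * u) * r u)) :
    ∀ t, 0 ≤ t →
      r t = s0 * f t * Real.exp (δ * t) ∧
      s0 - (∫ u in (0 : ℝ)..t, Real.exp (-δ * u) * r u)
        = s0 * (1 - ∫ u in (0 : ℝ)..t, f u) := by
  set F : ℝ → ℝ := fun x => ∫ u in (0:ℝ)..x, f u with hF
  set G : ℝ → ℝ := fun x => ∫ u in (0:ℝ)..x, Real.exp (-δ * u) * r u with hG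
  set φ : ℝ → ℝ := fun x => (s0 - G x) / (1 - F x) with hφ
  have hg_cont : ContinuousOn (fun u => Real.exp (-δ * u) * r u) (Set.Ici 0) :=
    (Continuous.comp Real.continuous_exp (continuous_const.mul continuous_id)).continuousOn.mul
      hr_cont
  have hFd : ∀ x, 0 ≤ x → HasDerivWithinAt F (f x) (Set.Ici x) x := fun x hx =>
    ftc_aux f hf_cont hx
  have hGd : ∀ x, 0 ≤ x → HasDerivWithinAt G (Real.exp (-δ * x) * r x) (Set.Ici x) x :=
    fun x hx => ftc_aux _ hg_cont hx
  have hFne : ∀ x, 0 ≤ x → 1 - F x ≠ 0 := fun x hx =>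
    ne_of_gt (by linarith [hF_lt x hx])
  have hφd : ∀ x, 0 ≤ x → HasDerivWithinAt φ 0 (Set.Ici x) x := by
    intro x hx
    have h := (((hGd x hx).const_sub s0).div ((hFd x hx).const_sub 1) (hFne x hx))
    have hfx : Real.exp (-δ * x) * r x * (1 - F x) = f x * (s0 - G x) := hfair x hx
    refine h.congr_deriv ?_
    rw [show (-(Real.exp (-δ * x) * r x) * (1 - F x) - (s0 - G x) * -f x) = 0 by linarith,
      zero_div]
  have hconst : ∀ t, 0 ≤ t → φ t = s0 := by
    intro t ht
    have hφcont : ContinuousOn φ (Set.Icc 0 t) := by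
      apply ContinuousOn.div
      · exact continuousOn_const.sub (cont_aux _ hg_cont ht)
      · exact continuousOn_const.sub (cont_aux f hf_cont ht)
      · intro x hx; exact hFne x hx.1
    have h := constant_of_has_deriv_right_zero (f := φ) (a := 0) (b := t) hφcont
      (fun x hx => hφd x hx.1) t (Set.right_mem_Icc.mpr ht)
    rw [h]
    simp [hφ, hF, hG, intervalIntegral.integral_same, hs0.ne']
  intro t ht
  have hx : s0 - G t = s0 * (1 - F t) := by
    have h := hconst t ht
    rw [hφ, div_eq_iff (hFne t ht)] at h
    exact h
  refine ⟨?_, hx⟩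
  have h := hfair t ht
  rw [show (∫ u in (0:ℝ)..t, Real.exp (-δ * u) * r u) = G t from rfl, hx] at h
  have hFne' := hFne t ht
  have hexp : Real.exp (-δ * t) ≠ 0 := Real.exp_ne_zero _
  have h2 : Real.exp (-δ * t) * r t = f t * s0 :=
    mul_right_cancel₀ hFne' (by linarith : Real.exp (-δ * t) * r t * (1 - F t) = f t * s0 * (1 - F t))
  have h3 : r t = f t * s0 / Real.exp (-δ * t) := by
    field_simp at h2 ⊢
    linarith
  rw [h3, neg_mul, Real.exp_neg]
  field_simp
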